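/- Let R be a ring, with elements g, t satisfying g * t = d * 1 for an invertible central element d, and t * g = s where s ∈ R. Let π_i, π_j, π_k ∈ R be elements each commuting with s. Let m : R ⊗ R → R be an R-bimodule-like multiplication (modeled as: Δ ∈ an (R, R⊗R)-correspondence). Suppose π_k * Δ * (π_i ⊗ π_j) = 0 in the appropriate correspondence group. Then Π_k * Δ_X * (Π_i ⊗ Π_j) = 0, where Π_l = (1/d) g * π_l * t and Δ_X = (1/d)(g ⊗ g ⊗ g)-pushforward of Δ, assuming the compatibility ᵗΓ_p ∘ Δ_X ∘ Γ_{p×p} = d² · (s/d) ∘ Δ ∘ ((s/d) ⊗ (s/d)). -/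
import Mathlib


/-- Abstract form of the descent of a multiplicative Chow–Künneth relation
along a quotient map. In a ring of correspondences `R` with a tensor-type
operation `ten` that is multiplicative in each variable, suppose `g * t = d·1`
for an invertible central `d`, `t * g = s`, the projectors `πi, πj, πk`
commute with `s`, and `πk * Δ * (πi ⊗ πj) = 0`. If the small-diagonal
compatibility `t * ΔX * (g ⊗ g) = d² · ((s/d) * Δ * ((s/d) ⊗ (s/d)))` holds,
then `Πk * ΔX * (Πi ⊗ Πj) = 0`, where `Πl = (1/d)·g * πl * t`. -/
theorem stmt_8 {R : Type*} [Ring R] (d g t s Δ ΔX πi πj πk : R) [Invertible d]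
    (hd : ∀ r : R, d * r = r * d)
    (hgt : g * t = d * 1) (htg : t * g = s)
    (ten : R → R → R)
    (hten : ∀ a b c e : R, ten (a * c) (b * e) = ten a b * ten c e)
    (hcommi : πi * s = s * πi) (hcommj : πj * s = s * πj)
    (hcommk : πk * s = s * πk)
    (hvanish : πk * Δ * ten πi πj = 0)
    (hcompat : t * ΔX * ten g g =
      d ^ 2 * ((⅟d * s) * Δ * ten (⅟d * s) (⅟d * s))) :
    (⅟d * g * πk * t) * ΔX * ten (⅟d * g * πi * t) (⅟d * g * πj * t) = 0 := by
  have hdc : ∀ r : R, ⅟d * r = r * ⅟d := fun r => by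
    have h1 : ⅟d * (d * r) * ⅟d = ⅟d * (r * d) * ⅟d := by rw [hd]
    rw [← mul_assoc, invOf_mul_self, one_mul, mul_assoc, mul_assoc,
      mul_invOf_self, mul_one] at h1
    exact h1.symm
  have hst : s * t = d * t := by
    rw [← htg, mul_assoc, hgt, mul_one, ← hd]
  have hgs : g * s = d * g := by
    rw [← htg, ← mul_assoc, hgt, mul_one]
  have hd2 : d ^ 2 * ⅟d = d := by
    rw [pow_two, mul_assoc, mul_invOf_self, mul_one]
  -- key cancellation lemma
  have keyl : ∀ p : R, p * s = s * p → ⅟d * s * (⅟d * p * t) = p * (⅟d * t) := by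
    intro p hp
    calc ⅟d * s * (⅟d * p * t)
        = ⅟d * (s * ⅟d) * (p * t) := by noncomm_ring
      _ = ⅟d * (⅟d * s) * (p * t) := by rw [hdc s]
      _ = ⅟d * ⅟d * (s * p * t) := by noncomm_ring
      _ = ⅟d * ⅟d * (p * s * t) := by rw [← hp]
      _ = ⅟d * ⅟d * (p * (d * t)) := by rw [mul_assoc p, hst]
      _ = ⅟d * ⅟d * (d * (p * t)) := by rw [← mul_assoc p, ← hd]; noncomm_ring
      _ = ⅟d * (⅟d * d) * (p * t) := by noncomm_ring
      _ = ⅟d * (p * t) := by rw [invOf_mul_self, mul_one]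
      _ = p * (⅟d * t) := by rw [← mul_assoc, hdc p, mul_assoc]
  have h1 : ten (⅟d * g * πi * t) (⅟d * g * πj * t)
      = ten g g * ten (⅟d * πi * t) (⅟d * πj * t) := by
    rw [← hten]
    congr 1 <;> rw [hdc g] <;> noncomm_ring
  have h2 : ten (⅟d * s) (⅟d * s) * ten (⅟d * πi * t) (⅟d * πj * t)
      = ten πi πj * ten (⅟d * t) (⅟d * t) := by
    rw [← hten, keyl πi hcommi, keyl πj hcommj, ← hten]
  calc (⅟d * g * πk * t) * ΔX * ten (⅟d * g * πi * t) (⅟d * g * πj * t)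
      = (⅟d * g * πk) * (t * ΔX * ten g g) * ten (⅟d * πi * t) (⅟d * πj * t) := by
        rw [h1]; noncomm_ring
    _ = (⅟d * g * πk) * (d ^ 2 * (⅟d * s * Δ * ten (⅟d * s) (⅟d * s)))
          * ten (⅟d * πi * t) (⅟d * πj * t) := by rw [hcompat]
    _ = (⅟d * g * πk) * (d * (s * Δ * ten (⅟d * s) (⅟d * s)))
          * ten (⅟d * πi * t) (⅟d * πj * t) := by
        rw [show d ^ 2 * (⅟d * s * Δ * ten (⅟d * s) (⅟d * s))
            = d ^ 2 * ⅟d * (s * Δ * ten (⅟d * s) (⅟d * s)) from by noncomm_ring, hd2]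
    _ = ⅟d * (d * (g * πk)) * (s * Δ * ten (⅟d * s) (⅟d * s))
          * ten (⅟d * πi * t) (⅟d * πj * t) := by
        rw [hd (g * πk)]; noncomm_ring
    _ = g * πk * (s * Δ * ten (⅟d * s) (⅟d * s))
          * ten (⅟d * πi * t) (⅟d * πj * t) := by
        rw [← mul_assoc ⅟d, invOf_mul_self, one_mul]
    _ = g * (πk * s) * Δ
          * (ten (⅟d * s) (⅟d * s) * ten (⅟d * πi * t) (⅟d * πj * t)) := by
        noncomm_ring
    _ = g * s * πk * Δ * (ten πi πj * ten (⅟d * t) (⅟d * t)) := by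
        rw [hcommk, h2]; noncomm_ring
    _ = d * g * (πk * Δ * ten πi πj) * ten (⅟d * t) (⅟d * t) := by
        rw [hgs]; noncomm_ring
    _ = 0 := by rw [hvanish, mul_zero, zero_mul]
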